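/- Let G be a connected weighted graph with vertex set X, edge weight b, and measure m, and let K be a finite connected proper subset of X. Suppose u : X × [0,T] → ℝ is such that t ↦ u(x,t) is continuously differentiable on (0,T) for every x ∈ K, u(·,t) is in the formal domain of the Laplacian for all t ∈ (0,T], (ℒ + ∂_t)u ≥ 0 on K × (0,T), and u ≥ 0 on ((X∖K) × (0,T]) ∪ (K × {0}). Then u ≥ 0 on K × [0,T]. -/

import Mathlib

open Set Filter Topology

/-- The formal graph Laplacian `ℒf(x) = (1/m(x)) ∑_y b(x,y)(f(x) − f(y))`. -/
noncomputable def lap {X : Type*} (b : X → X → ℝ) (m : X → ℝ) (f : X → ℝ) (x : X) : ℝ :=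
  (1 / m x) * ∑' y, b x y * (f x - f y)

/-- A set `K` is connected in the graph `b` if any two of its vertices are joined by
a path of neighbors staying inside `K`. -/
def ConnIn {X : Type*} (b : X → X → ℝ) (K : Set X) : Prop :=
  ∀ x ∈ K, ∀ y ∈ K, ∃ (n : ℕ) (p : ℕ → X), p 0 = x ∧ p n = y ∧ (∀ i ≤ n, p i ∈ K) ∧
    ∀ i < n, 0 < b (p i) (p (i + 1))

lemma deriv_nonpos_of_isMinOn' {g : ℝ → ℝ} {a t₀ : ℝ} (ha : a < t₀)
    (h : ∀ t ∈ Set.Icc a t₀, g t₀ ≤ g t) (hd : DifferentiableAt ℝ g t₀) :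
    deriv g t₀ ≤ 0 := by
  have H := hd.hasDerivAt
  rw [hasDerivAt_iff_tendsto_slope] at H
  have H' : Tendsto (slope g t₀) (𝓝[<] t₀) (𝓝 (deriv g t₀)) :=
    H.mono_left (nhdsWithin_mono _ fun t ht => ne_of_lt ht)
  refine le_of_tendsto H' ?_
  filter_upwards [Ioo_mem_nhdsLT_of_mem (Set.mem_Ioc.2 ⟨ha, le_refl t₀⟩)] with t ht
  have h1 : g t₀ ≤ g t := h t ⟨ht.1.le, ht.2.le⟩
  have h2 : t - t₀ < 0 := by linarith [ht.2]
  rw [slope_def_field]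
  show (g t - g t₀) / (t - t₀) ≤ 0
  exact div_nonpos_of_nonneg_of_nonpos (by linarith) h2.le

/-- Minimum principle for the heat equation on a finite connected proper subset `K`. -/
theorem minimum_principle_heat {X : Type*} (b : X → X → ℝ) (m : X → ℝ)
    (hb_symm : ∀ x y, b x y = b y x) (hb_nonneg : ∀ x y, 0 ≤ b x y)
    (hb_diag : ∀ x, b x x = 0) (hb_sum : ∀ x, Summable fun y => b x y)
    (hm : ∀ x, 0 < m x)
    (hconn : ConnIn b (Set.univ : Set X))
    (K : Set X) (hKfin : K.Finite) (hKconn : ConnIn b K) (hKproper : K ≠ Set.univ)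
    (T : ℝ) (hT : 0 ≤ T)
    (u : X → ℝ → ℝ)
    (hcont : ∀ x ∈ K, ContinuousOn (u x) (Set.Icc 0 T))
    (hdiff : ∀ x ∈ K, ∀ t ∈ Set.Ioo 0 T,
      DifferentiableAt ℝ (u x) t ∧ ContinuousAt (deriv (u x)) t)
    (hF : ∀ t ∈ Set.Ioc 0 T, ∀ x, Summable fun y => b x y * |u y t|)
    (hA1 : ∀ x ∈ K, ∀ t ∈ Set.Ioo 0 T,
      0 ≤ lap b m (fun z => u z t) x + deriv (u x) t)
    (hA2out : ∀ x ∉ K, ∀ t ∈ Set.Ioc 0 T, 0 ≤ u x t)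
    (hA2init : ∀ x ∈ K, 0 ≤ u x 0) :
    ∀ x ∈ K, ∀ t ∈ Set.Icc 0 T, 0 ≤ u x t := by
  -- main claim for truncated times
  have main : ∀ T', 0 < T' → T' < T → ∀ x ∈ K, ∀ s ∈ Set.Icc 0 T', 0 ≤ u x s := by
    intro T' hT'0 hT'T
    have claim : ∀ ε : ℝ, 0 < ε → ∀ x ∈ K, ∀ s ∈ Set.Icc 0 T', 0 ≤ u x s + ε * s := by
      intro ε hε
      by_contra hcon
      push_neg at hcon
      obtain ⟨x₁, hx₁, s₁, hs₁, hneg⟩ := hcon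
      set g : X → ℝ → ℝ := fun x s => u x s + ε * s with hg
      have hIccsub : Set.Icc (0:ℝ) T' ⊆ Set.Icc 0 T :=
        Set.Icc_subset_Icc le_rfl hT'T.le
      have hgc : ∀ x ∈ K, ContinuousOn (g x) (Set.Icc 0 T') := by
        intro x hx
        exact ((hcont x hx).mono hIccsub).add ((continuous_const.mul continuous_id).continuousOn)
      -- minimizers in time for each vertex
      have hmin : ∀ x, x ∈ K → ∃ s, s ∈ Set.Icc 0 T' ∧ ∀ r ∈ Set.Icc 0 T', g x s ≤ g x r := by
        intro x hx
        obtain ⟨s, hs, hmin⟩ := isCompact_Icc.exists_isMinOn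
          (Set.nonempty_Icc.2 hT'0.le) (hgc x hx)
        exact ⟨s, hs, fun r hr => hmin hr⟩
      choose! τ hτ1 hτ2 using hmin
      obtain ⟨x₀, hx₀K, hx₀min⟩ :=
        Set.exists_min_image K (fun x => g x (τ x)) hKfin ⟨x₁, hx₁⟩
      have hglobal : ∀ x ∈ K, ∀ s ∈ Set.Icc 0 T', g x₀ (τ x₀) ≤ g x s :=
        fun x hx s hs => (hx₀min x hx).trans (hτ2 x hx s hs)
      set t₀ := τ x₀ with ht₀def
      have ht₀ : t₀ ∈ Set.Icc 0 T' := hτ1 x₀ hx₀K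
      have hMneg : g x₀ t₀ < 0 := lt_of_le_of_lt (hglobal x₁ hx₁ s₁ hs₁) hneg
      have ht₀pos : 0 < t₀ := by
        rcases lt_or_eq_of_le ht₀.1 with h | h
        · exact h
        · exfalso
          have : g x₀ 0 = u x₀ 0 := by simp [hg]
          rw [← h] at hMneg
          rw [this] at hMneg
          exact absurd (hA2init x₀ hx₀K) (not_le.2 hMneg)
      have ht₀Ioo : t₀ ∈ Set.Ioo 0 T := ⟨ht₀pos, lt_of_le_of_lt ht₀.2 hT'T⟩
      have ht₀Ioc : t₀ ∈ Set.Ioc 0 T := ⟨ht₀pos, ht₀Ioo.2.le⟩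
      -- derivative bound
      have hderiv : deriv (u x₀) t₀ ≤ -ε := by
        have hdu : DifferentiableAt ℝ (u x₀) t₀ := (hdiff x₀ hx₀K t₀ ht₀Ioo).1
        have hdg : DifferentiableAt ℝ (g x₀) t₀ :=
          hdu.add ((differentiableAt_fun_id.const_mul ε) : DifferentiableAt ℝ (fun s => ε * s) t₀)
        have hmin' : ∀ t ∈ Set.Icc 0 t₀, g x₀ t₀ ≤ g x₀ t := by
          intro t ht
          exact hglobal x₀ hx₀K t ⟨ht.1, ht.2.trans ht₀.2⟩
        have h1 : deriv (g x₀) t₀ ≤ 0 := deriv_nonpos_of_isMinOn' ht₀pos hmin' hdg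
        have h2 : deriv (g x₀) t₀ = deriv (u x₀) t₀ + ε := by
          have : deriv (g x₀) t₀ = deriv (u x₀) t₀ + deriv (fun s => ε * s) t₀ :=
            deriv_add hdu (differentiableAt_fun_id.const_mul ε)
          rw [this]
          have h3 : deriv (fun s : ℝ => ε * s) t₀ = ε := by
            rw [deriv_const_mul_field]
            simp
          rw [h3]
        linarith
      -- Laplacian bound
      have hlap : lap b m (fun z => u z t₀) x₀ ≤ 0 := by
        have hterm : ∀ y, b x₀ y * (u x₀ t₀ - u y t₀) ≤ 0 := by
          intro y
          have hle : u x₀ t₀ ≤ u y t₀ := by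
            by_cases hy : y ∈ K
            · have := hglobal y hy t₀ ht₀
              simp only [hg] at this
              linarith
            · have h1 : 0 ≤ u y t₀ := hA2out y hy t₀ ht₀Ioc
              have h2 : u x₀ t₀ + ε * t₀ < 0 := hMneg
              nlinarith [ht₀pos, hε]
          exact mul_nonpos_iff.2 (Or.inl ⟨hb_nonneg x₀ y, by linarith⟩)
        have htsum : ∑' y, b x₀ y * (u x₀ t₀ - u y t₀) ≤ 0 := tsum_nonpos hterm
        unfold lap
        have hm0 : 0 ≤ 1 / m x₀ := div_nonneg zero_le_one (hm x₀).le
        exact mul_nonpos_iff.2 (Or.inl ⟨hm0, htsum⟩)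
      have := hA1 x₀ hx₀K t₀ ht₀Ioo
      linarith
    -- let ε → 0
    intro x hx s hs
    by_contra hlt
    push_neg at hlt
    rcases lt_or_eq_of_le hs.1 with hspos | hs0
    · have hε : 0 < -u x s / (2 * s) := div_pos (by linarith) (by linarith)
      have := claim _ hε x hx s hs
      have h2 : u x s + -u x s / (2 * s) * s = u x s / 2 := by
        field_simp
        ring
      rw [h2] at this
      linarith
    · rw [← hs0] at hlt
      exact absurd (hA2init x hx) (not_le.2 hlt)
  -- conclude
  intro x hx t ht
  rcases lt_or_eq_of_le ht.2 with htT | htT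
  · rcases lt_or_eq_of_le ht.1 with htpos | ht0
    · exact main t htpos htT x hx t ⟨ht.1, le_rfl⟩
    · rw [← ht0]; exact hA2init x hx
  · -- t = T; use continuity
    rcases lt_or_eq_of_le hT with hTpos | hT0
    · have hIco : ∀ s ∈ Set.Ico (0:ℝ) T, 0 ≤ u x s := by
        intro s hsIco
        rcases lt_or_eq_of_le hsIco.1 with hspos | hs0
        · exact main s hspos hsIco.2 x hx s ⟨hsIco.1, le_rfl⟩
        · rw [← hs0]; exact hA2init x hx
      have hcw : Tendsto (u x) (𝓝[Set.Icc 0 T] T) (𝓝 (u x T)) :=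
        (hcont x hx T ⟨hT, le_rfl⟩)
      have hcw' : Tendsto (u x) (𝓝[Set.Ico 0 T] T) (𝓝 (u x T)) :=
        hcw.mono_left (nhdsWithin_mono _ Set.Ico_subset_Icc_self)
      have hNeBot : (𝓝[Set.Ico (0:ℝ) T] T).NeBot := by
        rw [← mem_closure_iff_nhdsWithin_neBot, closure_Ico (ne_of_lt hTpos)]
        exact ⟨hT, le_rfl⟩
      have : 0 ≤ u x T :=
        ge_of_tendsto hcw' (eventually_nhdsWithin_of_forall hIco)
      rw [htT]; exact this
    · rw [htT, ← hT0]; exact hA2init x hx
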